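/- Let n = 3, q a positive integer, 2q-2 ≤ a ≤ 3q-3 and 0 ≤ b < q. Then in A = ℤ[x₁,x₂,x₃]/⟨x₁x₂x₃-1⟩, the truncated Schur function s^{(q)}_{(a,b)} := h_a^{(q)} h_b^{(q)} - h_{a+1}^{(q)} h_{b-1}^{(q)} equals the ordinary Schur polynomial s_{(3q-3-a+b, 3q-3-a)} in three variables. -/

import Mathlib

open MvPolynomial

/-- The complete homogeneous symmetric polynomial `h_d` in `x₁, x₂, x₃`. -/
noncomputable def fullH (d : ℕ) : MvPolynomial (Fin 3) ℤ :=
  ∑ s ∈ (Fintype.piFinset fun _ : Fin 3 => Finset.range (d + 1)).filter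
      (fun s => ∑ i, s i = d),
    ∏ i, X i ^ s i

/-- The `q`-truncated complete symmetric polynomial `h_d^{(q)}` in `x₁, x₂, x₃`. -/
noncomputable def truncH (q d : ℕ) : MvPolynomial (Fin 3) ℤ :=
  ∑ s ∈ (Fintype.piFinset fun _ : Fin 3 => Finset.range q).filter
      (fun s => ∑ i, s i = d),
    ∏ i, X i ^ s i

/-- The Schur polynomial `s_{(a,b)} = s_{(a,b,0)}` in `x₁, x₂, x₃`, via the
Jacobi–Trudi identity `s_{(a,b)} = h_a h_b - h_{a+1} h_{b-1}` (with `h_{-1} = 0`). -/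
noncomputable def schur (a b : ℕ) : MvPolynomial (Fin 3) ℤ :=
  fullH a * fullH b - fullH (a + 1) * (if b = 0 then 0 else fullH (b - 1))

/-- The `q`-truncated Schur polynomial
`s^{(q)}_{(a,b)} = h_a^{(q)} h_b^{(q)} - h_{a+1}^{(q)} h_{b-1}^{(q)}` (with `h_{-1}^{(q)} = 0`). -/
noncomputable def truncSchur (q a b : ℕ) : MvPolynomial (Fin 3) ℤ :=
  truncH q a * truncH q b - truncH q (a + 1) * (if b = 0 then 0 else truncH q (b - 1))

/-- The relation ideal `⟨x₁x₂x₃ - 1⟩` defining `A = ℤ[x₁,x₂,x₃]/⟨x₁x₂x₃-1⟩`. -/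
noncomputable def rel3 : Ideal (MvPolynomial (Fin 3) ℤ) :=
  Ideal.span {X 0 * X 1 * X 2 - 1}

/-- The duality `f ↦ f^∨` induced by `xᵢ ↦ xᵢ⁻¹`; since `xᵢ⁻¹ = ∏_{j≠i} xⱼ` modulo
`x₁x₂x₃ = 1`, it is induced by the substitution `xᵢ ↦ ∏_{j≠i} xⱼ`. -/
noncomputable def dualize (f : MvPolynomial (Fin 3) ℤ) : MvPolynomial (Fin 3) ℤ :=
  MvPolynomial.aeval
    (fun i : Fin 3 => ∏ j ∈ Finset.univ.erase i, (X j : MvPolynomial (Fin 3) ℤ)) f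

namespace Stmt10Aux

open Finset

abbrev B := AddMonoidAlgebra ℤ (ℤ × ℤ)

noncomputable def g (p : ℤ × ℤ) : B := AddMonoidAlgebra.single p 1

lemma g_mul (p r : ℤ × ℤ) : g p * g r = g (p + r) := by
  simp [g, AddMonoidAlgebra.single_mul_single]

lemma g_pow (n : ℕ) (p : ℤ × ℤ) : g p ^ n = g (n • p) := by
  induction n with
  | zero => simp [g]; exact (AddMonoidAlgebra.one_def).symm
  | succ n ih => rw [pow_succ, ih, g_mul, succ_nsmul]

lemma g_zero : g 0 = 1 := (AddMonoidAlgebra.one_def).symm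

lemma forall_fin3 {P : Fin 3 → Prop} : (∀ i, P i) ↔ P 0 ∧ P 1 ∧ P 2 := by
  refine ⟨fun h => ⟨h 0, h 1, h 2⟩, fun h i => ?_⟩
  obtain ⟨h0, h1, h2⟩ := h
  match i with
  | ⟨0,_⟩ => exact h0
  | ⟨1,_⟩ => exact h1
  | ⟨2,_⟩ => exact h2

noncomputable def ψ : MvPolynomial (Fin 3) ℤ →ₐ[ℤ] B :=
  MvPolynomial.aeval ![g (1,0), g (0,1), g (-1,-1)]

lemma psi_monom (s : Fin 3 → ℕ) :
    ψ (∏ i, X i ^ s i) = g ((s 0 : ℤ) - s 2, (s 1 : ℤ) - s 2) := by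
  simp only [map_prod, map_pow, ψ, aeval_X]
  rw [Fin.prod_univ_three]
  simp only [Matrix.cons_val_zero, Matrix.cons_val_one, Matrix.head_cons, Matrix.cons_val_two,
    Matrix.tail_cons]
  rw [g_pow, g_pow, g_pow, g_mul, g_mul]
  congr 1
  simp [Prod.ext_iff, Prod.smul_def]
  constructor <;> ring

def C3 (d : ℕ) : Finset (Fin 3 → ℕ) :=
  (Fintype.piFinset fun _ : Fin 3 => Finset.range (d + 1)).filter (fun s => ∑ i, s i = d)

lemma mem_C3 {d : ℕ} {s : Fin 3 → ℕ} : s ∈ C3 d ↔ s 0 + s 1 + s 2 = d := by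
  simp only [C3, mem_filter, Fintype.mem_piFinset, mem_range, Fin.sum_univ_three, forall_fin3]
  omega

noncomputable def HH (d : ℕ) : B := ∑ s ∈ C3 d, g ((s 0 : ℤ) - s 2, (s 1 : ℤ) - s 2)
noncomputable def HSt (m : ℕ) : B := ∑ s ∈ C3 m, g ((s 2 : ℤ) - s 0, (s 2 : ℤ) - s 1)

lemma psi_fullH (d : ℕ) : ψ (fullH d) = HH d := by
  unfold fullH HH
  rw [map_sum]
  exact Finset.sum_congr rfl fun s _ => psi_monom s

lemma truncH_eq_fullH {q b : ℕ} (h : b < q) : truncH q b = fullH b := by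
  unfold truncH fullH
  apply Finset.sum_congr _ (fun _ _ => rfl)
  ext s
  simp only [mem_filter, Fintype.mem_piFinset, mem_range, Fin.sum_univ_three, forall_fin3]
  omega

lemma truncH_eq_zero {q d : ℕ} (h : 3 * q - 3 < d) : truncH q d = 0 := by
  unfold truncH
  convert Finset.sum_empty
  ext s
  simp only [mem_filter, Fintype.mem_piFinset, mem_range, Fin.sum_univ_three, forall_fin3,
    notMem_empty, iff_false, not_and]
  omega

lemma psi_truncH_hi {q m a : ℕ} (hq : 1 ≤ q) (hm : m ≤ q - 1) (ha : a + m = 3 * (q - 1)) :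
    ψ (truncH q a) = HSt m := by
  unfold truncH HSt
  rw [map_sum]
  rw [Finset.sum_congr rfl (fun s _ => psi_monom s)]
  apply Finset.sum_nbij' (i := fun s j => q - 1 - s j) (j := fun t j => q - 1 - t j)
  · intro s hs
    simp only [mem_filter, Fintype.mem_piFinset, mem_range, Fin.sum_univ_three, forall_fin3] at hs
    rw [mem_C3]
    try dsimp only
    omega
  · intro t ht
    rw [mem_C3] at ht
    simp only [mem_filter, Fintype.mem_piFinset, mem_range, Fin.sum_univ_three, forall_fin3]
    refine ⟨⟨?_, ?_, ?_⟩, ?_⟩ <;> (try dsimp only) <;> omega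
  · intro s hs
    simp only [mem_filter, Fintype.mem_piFinset, mem_range, Fin.sum_univ_three, forall_fin3] at hs
    funext j
    dsimp only
    have : s j < q := by
      obtain ⟨h0, h1, h2⟩ := hs.1
      match j with
      | ⟨0,_⟩ => exact h0
      | ⟨1,_⟩ => exact h1
      | ⟨2,_⟩ => exact h2
    omega
  · intro t ht
    rw [mem_C3] at ht
    funext j
    dsimp only
    have : t j ≤ m :=
      match j with
      | ⟨0,_⟩ => show t 0 ≤ m by omega
      | ⟨1,_⟩ => show t 1 ≤ m by omega
      | ⟨2,_⟩ => show t 2 ≤ m by omega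
    omega
  · intro s hs
    simp only [mem_filter, Fintype.mem_piFinset, mem_range, Fin.sum_univ_three, forall_fin3] at hs
    obtain ⟨⟨h0, h1, h2⟩, hsum⟩ := hs
    congr 1
    have e0 : ((q - 1 - s 0 : ℕ) : ℤ) = (q:ℤ) - 1 - s 0 := by omega
    have e2 : ((q - 1 - s 2 : ℕ) : ℤ) = (q:ℤ) - 1 - s 2 := by omega
    have e1 : ((q - 1 - s 1 : ℕ) : ℤ) = (q:ℤ) - 1 - s 1 := by omega
    simp only [Prod.mk.injEq]
    try dsimp only
    constructor <;> omega

noncomputable def Kf (z : ℤ) : B :=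
  g (z+2,1) - g (1,z+2) - g (z+1,-1) + g (-1,z+1) + g (-z-1,-z-2) - g (-z-2,-z-1)

noncomputable def Lf (z : ℤ) : B :=
  g (-1,-z-2) + g (-z-1,1) + g (z+2,z+1) - g (-z-2,-1) - g (1,-z-1) - g (z+1,z+2)

lemma Kf_neg_one : Kf (-1) = 0 := by simp only [Kf]; norm_num

lemma master (μ β : ℤ) :
    Lf μ * Kf β - Lf (μ-1) * Kf (β-1) = Kf (μ+β) * Kf μ - Kf (μ+β+1) * Kf (μ-1) := by
  simp only [Kf, Lf, sub_mul, add_mul, mul_sub, mul_add, g_mul, Prod.mk_add_mk]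
  ring_nf

noncomputable def P2 (n : ℕ) : B := ∑ i ∈ range (n+1), g ((i:ℤ), (n:ℤ) - i)

noncomputable def DD : B :=
  (g (1,0) - g (0,1)) * ((g (1,0) - g (-1,-1)) * (g (0,1) - g (-1,-1)))

lemma P2_succ (n : ℕ) : P2 (n+1) = g (0,1) * P2 n + g ((n:ℤ)+1, 0) := by
  unfold P2
  rw [Finset.sum_range_succ, Finset.mul_sum]
  congr 1
  · apply Finset.sum_congr rfl
    intro i hi
    rw [g_mul]
    congr 1
    simp [Prod.ext_iff]; ring
  · congr 1
    simp [Prod.ext_iff]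

lemma tele0 (n : ℕ) : (g (1,0) - g (0,1)) * P2 n = g ((n:ℤ)+1, 0) - g (0, (n:ℤ)+1) := by
  induction n with
  | zero =>
      unfold P2
      rw [Finset.sum_range_one]
      norm_num [sub_mul, g_mul]
  | succ n ih =>
      have h : (g (1,0) - g (0,1)) * P2 (n+1)
          = g (0,1) * ((g (1,0) - g (0,1)) * P2 n) + (g (1,0) - g (0,1)) * g ((n:ℤ)+1, 0) := by
        rw [P2_succ]; ring
      rw [h, ih]
      simp only [sub_mul, mul_sub, g_mul, Prod.mk_add_mk]
      push_cast
      ring_nf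

noncomputable def Qu (d : ℕ) : B := ∑ k ∈ range (d+1), g ((d:ℤ)+1-2*k, -(k:ℤ))
noncomputable def Qv (d : ℕ) : B := ∑ k ∈ range (d+1), g (-(k:ℤ), (d:ℤ)+1-2*k)

lemma HH_split (d : ℕ) : HH d = ∑ k ∈ range (d+1), g (-(k:ℤ), -(k:ℤ)) * P2 (d - k) := by
  unfold HH P2
  simp only [Finset.mul_sum]
  rw [Finset.sum_sigma']
  apply Finset.sum_nbij' (i := fun s => (⟨s 2, s 0⟩ : Σ _ : ℕ, ℕ))
    (j := fun p => ![p.2, d - p.1 - p.2, p.1])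
  · intro s hs
    rw [mem_C3] at hs
    simp only [Finset.mem_sigma, mem_range]
    omega
  · intro p hp
    simp only [Finset.mem_sigma, mem_range] at hp
    rw [mem_C3]
    simp only [Matrix.cons_val_zero, Matrix.cons_val_one, Matrix.head_cons,
      Matrix.cons_val_two, Matrix.tail_cons]
    omega
  · intro s hs
    rw [mem_C3] at hs
    funext j
    match j with
    | ⟨0,_⟩ =>
        show (![s 0, d - s 2 - s 0, s 2]) 0 = s 0
        simp
    | ⟨1,_⟩ =>
        show (![s 0, d - s 2 - s 0, s 2]) 1 = s 1
        simp only [Matrix.cons_val_one, Matrix.head_cons, Matrix.cons_val_zero]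
        omega
    | ⟨2,_⟩ =>
        show (![s 0, d - s 2 - s 0, s 2]) 2 = s 2
        simp
  · intro p hp
    obtain ⟨k, i⟩ := p
    simp only [Finset.mem_sigma, mem_range] at hp
    simp only [Matrix.cons_val_zero, Matrix.cons_val_two, Matrix.tail_cons, Matrix.head_cons]
  · intro s hs
    rw [mem_C3] at hs
    rw [g_mul]
    congr 1
    simp only [Prod.mk_add_mk, Prod.mk.injEq]
    constructor <;> omega

lemma Qu_succ (d : ℕ) : Qu (d+1) = g (1,0) * Qu d + g (-(d:ℤ), -(d:ℤ)-1) := by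
  unfold Qu
  rw [Finset.sum_range_succ, Finset.mul_sum]
  congr 1
  · apply Finset.sum_congr rfl
    intro k hk
    rw [g_mul]
    congr 1
    apply Prod.ext <;> (simp; try omega)
  · congr 1
    apply Prod.ext <;> (simp; try omega)

lemma Qv_succ (d : ℕ) : Qv (d+1) = g (0,1) * Qv d + g (-(d:ℤ)-1, -(d:ℤ)) := by
  unfold Qv
  rw [Finset.sum_range_succ, Finset.mul_sum]
  congr 1
  · apply Finset.sum_congr rfl
    intro k hk
    rw [g_mul]
    congr 1
    apply Prod.ext <;> (simp; try omega)
  · congr 1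
    apply Prod.ext <;> (simp; try omega)

lemma tele_u (d : ℕ) : (g (1,0) - g (-1,-1)) * Qu d = g ((d:ℤ)+2, 0) - g (-(d:ℤ), -(d:ℤ)-1) := by
  induction d with
  | zero =>
      unfold Qu
      rw [Finset.sum_range_one]
      norm_num [sub_mul, g_mul]
  | succ d ih =>
      have h : (g (1,0) - g (-1,-1)) * Qu (d+1)
          = g (1,0) * ((g (1,0) - g (-1,-1)) * Qu d)
            + (g (1,0) - g (-1,-1)) * g (-(d:ℤ), -(d:ℤ)-1) := by
        rw [Qu_succ]; ring
      rw [h, ih]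
      simp only [sub_mul, mul_sub, g_mul, Prod.mk_add_mk]
      push_cast
      ring_nf

lemma tele_v (d : ℕ) : (g (0,1) - g (-1,-1)) * Qv d = g (0, (d:ℤ)+2) - g (-(d:ℤ)-1, -(d:ℤ)) := by
  induction d with
  | zero =>
      unfold Qv
      rw [Finset.sum_range_one]
      norm_num [sub_mul, g_mul]
  | succ d ih =>
      have h : (g (0,1) - g (-1,-1)) * Qv (d+1)
          = g (0,1) * ((g (0,1) - g (-1,-1)) * Qv d)
            + (g (0,1) - g (-1,-1)) * g (-(d:ℤ)-1, -(d:ℤ)) := by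
        rw [Qv_succ]; ring
      rw [h, ih]
      simp only [sub_mul, mul_sub, g_mul, Prod.mk_add_mk]
      push_cast
      ring_nf

lemma split1 (d : ℕ) : (g (1,0) - g (0,1)) * HH d = Qu d - Qv d := by
  rw [HH_split, Finset.mul_sum]
  have : ∀ k ∈ range (d+1), (g (1,0) - g (0,1)) * (g (-(k:ℤ), -(k:ℤ)) * P2 (d - k))
      = g ((d:ℤ)+1-2*k, -(k:ℤ)) - g (-(k:ℤ), (d:ℤ)+1-2*k) := by
    intro k hk
    simp only [mem_range] at hk
    have h : (g (1,0) - g (0,1)) * (g (-(k:ℤ), -(k:ℤ)) * P2 (d - k))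
        = g (-(k:ℤ), -(k:ℤ)) * ((g (1,0) - g (0,1)) * P2 (d - k)) := by ring
    rw [h, tele0, mul_sub, g_mul, g_mul]
    have e : ((d-k:ℕ):ℤ) = (d:ℤ) - k := by omega
    congr 2 <;> simp [Prod.ext_iff, e] <;> ring
  rw [Finset.sum_congr rfl this, Finset.sum_sub_distrib]
  rfl

lemma Delta_HH (d : ℕ) : DD * HH d = Kf d := by
  have h1 : DD * HH d
      = ((g (1,0) - g (-1,-1)) * (g (0,1) - g (-1,-1))) * ((g (1,0) - g (0,1)) * HH d) := by
    unfold DD; ring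
  rw [h1, split1]
  have h2 : ((g (1,0) - g (-1,-1)) * (g (0,1) - g (-1,-1))) * (Qu d - Qv d)
      = (g (0,1) - g (-1,-1)) * ((g (1,0) - g (-1,-1)) * Qu d)
        - (g (1,0) - g (-1,-1)) * ((g (0,1) - g (-1,-1)) * Qv d) := by ring
  rw [h2, tele_u, tele_v]
  simp only [Kf, sub_mul, mul_sub, g_mul, Prod.mk_add_mk]
  ring_nf

noncomputable def ι : B ≃ₐ[ℤ] B :=
  AddMonoidAlgebra.domCongr ℤ ℤ (AddEquiv.neg (ℤ × ℤ))

lemma iota_g (p : ℤ × ℤ) : ι (g p) = g (-p) := by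
  simp [ι, g]

lemma iota_HH (m : ℕ) : ι (HH m) = HSt m := by
  unfold HH HSt
  rw [map_sum]
  apply Finset.sum_congr rfl
  intro s hs
  rw [iota_g]
  congr 1
  simp [Prod.ext_iff]

lemma iota_DD : ι DD = -DD := by
  unfold DD
  simp only [map_mul, map_sub, iota_g]
  simp only [Prod.neg_mk, neg_zero, neg_neg]
  simp only [sub_mul, mul_sub, g_mul, Prod.mk_add_mk, neg_mul, mul_neg]
  ring_nf

lemma iota_Kf (d : ℤ) : ι (Kf d) = -(Lf d) := by
  unfold Kf Lf
  simp only [map_sub, map_add, iota_g, Prod.neg_mk]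
  ring_nf

lemma Delta_HSt (m : ℕ) : DD * HSt m = Lf m := by
  rw [← iota_HH]
  have h : DD = -(ι DD) := by rw [iota_DD]; ring
  calc DD * ι (HH m) = -(ι DD) * ι (HH m) := by conv_lhs => rw [h]
  _ = -((ι DD) * ι (HH m)) := by ring
  _ = -(ι (DD * HH m)) := by rw [map_mul]
  _ = -(ι (Kf m)) := by rw [Delta_HH]
  _ = Lf m := by rw [iota_Kf]; ring

lemma g_sub_ne {p r : ℤ × ℤ} (h : p ≠ r) : g p - g r ≠ 0 := by
  intro hc
  have : (g p - g r).coeff p = 0 := by rw [hc]; rfl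
  rw [AddMonoidAlgebra.coeff_sub, Finsupp.sub_apply] at this
  simp [g, AddMonoidAlgebra.coeff_single, Finsupp.single_apply, h, (Ne.symm h)] at this

lemma DD_ne : DD ≠ 0 := by
  unfold DD
  apply mul_ne_zero
  · exact g_sub_ne (by decide)
  apply mul_ne_zero
  · exact g_sub_ne (by decide)
  · exact g_sub_ne (by decide)

lemma masterN {m b : ℕ} (hm : 1 ≤ m) (hb : 1 ≤ b) :
    Lf (m:ℤ) * Kf (b:ℤ) - Lf ((m-1:ℕ):ℤ) * Kf ((b-1:ℕ):ℤ)
      = Kf ((m+b:ℕ):ℤ) * Kf (m:ℤ) - Kf ((m+b+1:ℕ):ℤ) * Kf ((m-1:ℕ):ℤ) := by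
  have e1 : ((m-1:ℕ):ℤ) = (m:ℤ)-1 := by omega
  have e2 : ((b-1:ℕ):ℤ) = (b:ℤ)-1 := by omega
  have e3 : ((m+b:ℕ):ℤ) = (m:ℤ)+b := by omega
  have e4 : ((m+b+1:ℕ):ℤ) = (m:ℤ)+b+1 := by omega
  rw [e1, e2, e3, e4]
  exact master m b

lemma masterN0 {m : ℕ} (hm : 1 ≤ m) :
    Lf (m:ℤ) * Kf ((0:ℕ):ℤ)
      = Kf ((m+0:ℕ):ℤ) * Kf (m:ℤ) - Kf ((m+0+1:ℕ):ℤ) * Kf ((m-1:ℕ):ℤ) := by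
  have h := master (m:ℤ) 0
  rw [show ((0:ℤ)-1) = -1 by ring, Kf_neg_one, mul_zero, sub_zero] at h
  rw [show ((m+0:ℕ):ℤ) = (m:ℤ)+0 from by omega,
    show ((m+0+1:ℕ):ℤ) = (m:ℤ)+0+1 from by omega,
    show ((m-1:ℕ):ℤ) = (m:ℤ)-1 from by omega,
    show ((0:ℕ):ℤ) = 0 from rfl]
  exact h

lemma C3_zero : C3 0 = {fun _ => 0} := by
  ext s
  rw [mem_C3]
  simp only [Finset.mem_singleton, funext_iff, forall_fin3]
  omega

lemma HH_zero : HH 0 = 1 := by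
  unfold HH
  rw [C3_zero, Finset.sum_singleton]
  norm_num
  exact g_zero

lemma HSt_zero : HSt 0 = 1 := by
  unfold HSt
  rw [C3_zero, Finset.sum_singleton]
  norm_num
  exact g_zero

-- the quotient ring and the bridge
abbrev A := MvPolynomial (Fin 3) ℤ ⧸ rel3

lemma hrel : Ideal.Quotient.mk rel3 (X 0 * X 1 * X 2) = 1 := by
  have hmem : (X 0 * X 1 * X 2 - 1 : MvPolynomial (Fin 3) ℤ) ∈ rel3 :=
    Ideal.subset_span (Set.mem_singleton _)
  have h0 : Ideal.Quotient.mk rel3 (X 0 * X 1 * X 2 - 1) = 0 :=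
    Ideal.Quotient.eq_zero_iff_mem.mpr hmem
  rw [map_sub, map_one, sub_eq_zero] at h0
  exact h0

noncomputable def U : Aˣ where
  val := Ideal.Quotient.mk rel3 (X 0)
  inv := Ideal.Quotient.mk rel3 (X 1 * X 2)
  val_inv := by
    rw [← map_mul]
    rw [show (X 0 * (X 1 * X 2) : MvPolynomial (Fin 3) ℤ) = X 0 * X 1 * X 2 by ring]
    exact hrel
  inv_val := by
    rw [← map_mul]
    rw [show (X 1 * X 2 * X 0 : MvPolynomial (Fin 3) ℤ) = X 0 * X 1 * X 2 by ring]
    exact hrel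

noncomputable def V : Aˣ where
  val := Ideal.Quotient.mk rel3 (X 1)
  inv := Ideal.Quotient.mk rel3 (X 0 * X 2)
  val_inv := by
    rw [← map_mul]
    rw [show (X 1 * (X 0 * X 2) : MvPolynomial (Fin 3) ℤ) = X 0 * X 1 * X 2 by ring]
    exact hrel
  inv_val := by
    rw [← map_mul]
    rw [show (X 0 * X 2 * X 1 : MvPolynomial (Fin 3) ℤ) = X 0 * X 1 * X 2 by ring]
    exact hrel

noncomputable def φ : Multiplicative (ℤ × ℤ) →* A where
  toFun := fun p => ((U ^ (p.toAdd.1) * V ^ (p.toAdd.2) : Aˣ) : A)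
  map_one' := by simp
  map_mul' := by
    intro p r
    simp only [toAdd_mul, Prod.fst_add, Prod.snd_add, zpow_add, Units.val_mul]
    ring

noncomputable def χ : B →ₐ[ℤ] A := AddMonoidAlgebra.lift ℤ A (ℤ × ℤ) φ

lemma chi_g (p : ℤ × ℤ) : χ (g p) = ((U ^ p.1 * V ^ p.2 : Aˣ) : A) := by
  unfold χ g
  rw [AddMonoidAlgebra.lift_single, one_smul]
  rfl

lemma chi_psi (f : MvPolynomial (Fin 3) ℤ) : χ (ψ f) = Ideal.Quotient.mk rel3 f := by
  have h : χ.comp ψ = Ideal.Quotient.mkₐ ℤ rel3 := by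
    apply MvPolynomial.algHom_ext
    intro i
    match i with
    | ⟨0,_⟩ =>
        show χ (ψ (X 0)) = Ideal.Quotient.mkₐ ℤ rel3 (X 0)
        rw [show ψ (X 0) = g (1,0) by simp [ψ], chi_g]
        simp [U, Ideal.Quotient.mkₐ_eq_mk]
    | ⟨1,_⟩ =>
        show χ (ψ (X 1)) = Ideal.Quotient.mkₐ ℤ rel3 (X 1)
        rw [show ψ (X 1) = g (0,1) by simp [ψ], chi_g]
        simp [V, Ideal.Quotient.mkₐ_eq_mk]
    | ⟨2,_⟩ =>
        show χ (ψ (X 2)) = Ideal.Quotient.mkₐ ℤ rel3 (X 2)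
        rw [show ψ (X 2) = g (-1,-1) by simp [ψ], chi_g]
        have h1 : ((U ^ (-1:ℤ) * V ^ (-1:ℤ) : Aˣ) : A)
            = Ideal.Quotient.mk rel3 (X 1 * X 2) * Ideal.Quotient.mk rel3 (X 0 * X 2) := by
          simp only [zpow_neg, zpow_one, Units.val_mul]
          rfl
        rw [h1, ← map_mul, Ideal.Quotient.mkₐ_eq_mk]
        rw [Ideal.Quotient.mk_eq_mk_iff_sub_mem]
        unfold rel3
        rw [Ideal.mem_span_singleton]
        exact ⟨X 2, by ring⟩
  calc χ (ψ f) = (χ.comp ψ) f := rfl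
  _ = Ideal.Quotient.mkₐ ℤ rel3 f := by rw [h]
  _ = Ideal.Quotient.mk rel3 f := by rw [Ideal.Quotient.mkₐ_eq_mk]

end Stmt10Aux

open Stmt10Aux in
/-- For `q ≥ 1`, `2q-2 ≤ a ≤ 3q-3` and `0 ≤ b < q`, the truncated Schur function
`s^{(q)}_{(a,b)}` equals the ordinary Schur polynomial `s_{(3q-3-a+b, 3q-3-a)}`
in `A = ℤ[x₁,x₂,x₃]/⟨x₁x₂x₃-1⟩`. -/
theorem stmt_10 (q a b : ℕ) (hq : 1 ≤ q) (ha₁ : 2 * q - 2 ≤ a) (ha₂ : a ≤ 3 * q - 3)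
    (hb : b < q) :
    Ideal.Quotient.mk rel3 (truncSchur q a b) =
      Ideal.Quotient.mk rel3 (schur (3 * q - 3 - a + b) (3 * q - 3 - a)) := by
  set m := 3 * q - 3 - a with hm_def
  have ham : a + m = 3 * (q - 1) := by omega
  have hmq : m ≤ q - 1 := by omega
  -- reduce to an identity in B
  suffices hB : ψ (truncSchur q a b) = ψ (schur (m + b) m) by
    have h2 := congrArg χ hB
    rwa [chi_psi, chi_psi] at h2
  -- compute the images
  have hta : ψ (truncH q a) = HSt m := psi_truncH_hi hq hmq ham
  have htb : ψ (truncH q b) = HH b := by rw [truncH_eq_fullH hb, psi_fullH]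
  unfold truncSchur schur
  by_cases hm0 : m = 0
  · -- top degree: the `a+1` truncated polynomial vanishes
    have hz : ψ (truncH q (a + 1)) = 0 := by
      rw [truncH_eq_zero (by omega), map_zero]
    rw [if_pos hm0]
    by_cases hb0 : b = 0
    · rw [if_pos hb0]
      simp only [map_sub, map_mul, map_zero, mul_zero, hta, htb, psi_fullH]
      rw [hm0, hb0]
      simp [HH_zero, HSt_zero]
    · rw [if_neg hb0]
      simp only [map_sub, map_mul, map_zero, mul_zero, hta, htb, hz, psi_fullH, zero_mul]
      rw [hm0]
      simp [HH_zero, HSt_zero]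
  · -- main case: 1 ≤ m
    have hm1 : 1 ≤ m := by omega
    have hta1 : ψ (truncH q (a + 1)) = HSt (m - 1) :=
      psi_truncH_hi hq (by omega) (by omega)
    rw [if_neg hm0]
    by_cases hb0 : b = 0
    · rw [if_pos hb0]
      simp only [map_sub, map_mul, map_zero, mul_zero, sub_zero, hta, htb, hta1, psi_fullH]
      rw [hb0]
      apply mul_left_cancel₀ DD_ne
      apply mul_left_cancel₀ DD_ne
      have lhs : DD * (DD * (HSt m * HH 0)) = (DD * HSt m) * (DD * HH 0) := by ring
      have rhs : DD * (DD * (HH (m+0) * HH m - HH (m+0+1) * HH (m-1)))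
          = (DD * HH (m+0)) * (DD * HH m) - (DD * HH (m+0+1)) * (DD * HH (m-1)) := by ring
      rw [lhs, rhs]
      simp only [Delta_HSt, Delta_HH]
      exact masterN0 hm1
    · rw [if_neg hb0]
      have hb1 : 1 ≤ b := by omega
      have htb1 : ψ (truncH q (b - 1)) = HH (b - 1) := by
        rw [truncH_eq_fullH (by omega), psi_fullH]
      simp only [map_sub, map_mul, hta, htb, hta1, htb1, psi_fullH]
      apply mul_left_cancel₀ DD_ne
      apply mul_left_cancel₀ DD_ne
      have lhs : DD * (DD * (HSt m * HH b - HSt (m-1) * HH (b-1)))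
          = (DD * HSt m) * (DD * HH b) - (DD * HSt (m-1)) * (DD * HH (b-1)) := by ring
      have rhs : DD * (DD * (HH (m+b) * HH m - HH (m+b+1) * HH (m-1)))
          = (DD * HH (m+b)) * (DD * HH m) - (DD * HH (m+b+1)) * (DD * HH (m-1)) := by ring
      rw [lhs, rhs]
      simp only [Delta_HSt, Delta_HH]
      exact masterN hm1 hb1
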